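/- Let A ∈ ℝ^{d×d} be positive definite, let M, M* ∈ ℝ^{d×d'} with ‖A^{1/2}(M − M*)‖_F ≤ √β for some β > 0, let φ ∈ ℝ^d with w = √(φᵀ A^{-1} φ), and let η ∈ ℝ^{d'}. Then |2 φᵀ (M − M*) η / (1 + w²)| ≤ 2 ‖η‖₂ · √β · min(w, 1/2). -/

import Mathlib

open Matrix Finset

set_option maxHeartbeats 1000000

/-- The Frobenius norm of a matrix. -/
noncomputable def frobNorm {d d' : ℕ} (Y : Matrix (Fin d) (Fin d') ℝ) : ℝ :=
  Real.sqrt (∑ i, ∑ j, (Y i j) ^ 2)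
section
open scoped ComplexOrder
noncomputable def Matrix.PosSemidef.sqrt {n 𝕜 : Type*} [Fintype n] [RCLike 𝕜] [DecidableEq n]
    {A : Matrix n n 𝕜} (hA : A.PosSemidef) : Matrix n n 𝕜 :=
  hA.1.eigenvectorUnitary.1 * diagonal ((↑) ∘ (√·) ∘ hA.1.eigenvalues) *
  (star hA.1.eigenvectorUnitary : Matrix n n 𝕜)
end
section
open scoped ComplexOrder
lemma Matrix.PosSemidef.sqrt_mul_self {n 𝕜 : Type*} [Fintype n] [RCLike 𝕜] [DecidableEq n]
    {A : Matrix n n 𝕜} (hA : A.PosSemidef) : hA.sqrt * hA.sqrt = A := by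
  have hU : (star hA.1.eigenvectorUnitary : Matrix n n 𝕜) * hA.1.eigenvectorUnitary.1 = 1 :=
    Unitary.coe_star_mul_self _
  have hD : diagonal (((↑) ∘ (√·) ∘ hA.1.eigenvalues : n → 𝕜)) *
      diagonal ((↑) ∘ (√·) ∘ hA.1.eigenvalues) = diagonal (RCLike.ofReal ∘ hA.1.eigenvalues) := by
    rw [diagonal_mul_diagonal]
    congr 1; funext i
    simp only [Function.comp_apply, ← RCLike.ofReal_mul, Real.mul_self_sqrt (hA.eigenvalues_nonneg i)]
  conv_rhs => rw [hA.1.spectral_theorem]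
  rw [Unitary.conjStarAlgAut_apply, ← hD]
  simp only [Matrix.PosSemidef.sqrt, Matrix.mul_assoc]
  rw [← Matrix.mul_assoc _ _ (diagonal _ * _), hU, Matrix.one_mul]
lemma Matrix.PosSemidef.posSemidef_sqrt {n 𝕜 : Type*} [Fintype n] [RCLike 𝕜] [DecidableEq n]
    {A : Matrix n n 𝕜} (hA : A.PosSemidef) : hA.sqrt.PosSemidef := by
  unfold Matrix.PosSemidef.sqrt
  have h : (star hA.1.eigenvectorUnitary : Matrix n n 𝕜) = (hA.1.eigenvectorUnitary.1)ᴴ := rfl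
  rw [h]
  apply PosSemidef.mul_mul_conjTranspose_same
  rw [posSemidef_diagonal_iff]
  intro i
  simp [Real.sqrt_nonneg]
end

/-- Symmetric matrices can be moved across a dot product. -/
lemma symm_mulVec_dot {n : ℕ} (S : Matrix (Fin n) (Fin n) ℝ) (hs : Sᵀ = S)
    (x y : Fin n → ℝ) : (S *ᵥ x) ⬝ᵥ y = x ⬝ᵥ (S *ᵥ y) := by
  rw [Matrix.dotProduct_mulVec, ← Matrix.mulVec_transpose, hs]

/-- Cauchy–Schwarz for dot products, absolute-value form. -/
lemma abs_dot_le {n : ℕ} (x y : Fin n → ℝ) :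
    |x ⬝ᵥ y| ≤ Real.sqrt (∑ i, (x i) ^ 2) * Real.sqrt (∑ i, (y i) ^ 2) := by
  have h := Finset.sum_mul_sq_le_sq_mul_sq Finset.univ x y
  have h1 : |x ⬝ᵥ y| = Real.sqrt ((∑ i, x i * y i) ^ 2) := by
    rw [Real.sqrt_sq_eq_abs]; rfl
  rw [h1, ← Real.sqrt_mul (by positivity)]
  exact Real.sqrt_le_sqrt h

/-- Uniform bound on the martingale increments `|G_{n,h}|` in Lemma 9:
if `‖A^{1/2}(M − M*)‖_F ≤ √β` and `w = √(φᵀ A⁻¹ φ)` then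
`|2 φᵀ(M − M*)η / (1 + w²)| ≤ 2‖η‖₂ √β min(w, 1/2)`. -/
theorem martingale_increment_bound {d d' : ℕ}
    (A : Matrix (Fin d) (Fin d) ℝ) (hA : A.PosDef)
    (M Mstar : Matrix (Fin d) (Fin d') ℝ) (β : ℝ) (hβ : 0 < β)
    (hball : frobNorm (hA.posSemidef.sqrt * (M - Mstar)) ≤ Real.sqrt β)
    (φ : Fin d → ℝ) (w : ℝ) (hw : w = Real.sqrt (φ ⬝ᵥ (A⁻¹ *ᵥ φ)))
    (η : Fin d' → ℝ) :
    |2 * (φ ⬝ᵥ ((M - Mstar) *ᵥ η)) / (1 + w ^ 2)| ≤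
      2 * Real.sqrt (∑ j, (η j) ^ 2) * Real.sqrt β * min w (1 / 2) := by
  set B := M - Mstar with hB
  set S := hA.posSemidef.sqrt with hSdef
  have hSS : S * S = A := hA.posSemidef.sqrt_mul_self
  have hSherm : S.IsHermitian := hA.posSemidef.posSemidef_sqrt.1
  have hSsym : Sᵀ = S := by simpa [Matrix.IsHermitian] using hSherm
  have hdetA : A.det ≠ 0 := hA.det_pos.ne'
  have hdetS : IsUnit S.det := by
    rw [isUnit_iff_ne_zero]
    intro h
    apply hdetA
    rw [← hSS, Matrix.det_mul, h, mul_zero]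
  have hSinv_sym : (S⁻¹)ᵀ = S⁻¹ := by
    rw [Matrix.transpose_nonsing_inv, hSsym]
  set ψ := S⁻¹ *ᵥ φ with hψ
  have hφψ : S *ᵥ ψ = φ := by
    rw [hψ, Matrix.mulVec_mulVec, Matrix.mul_nonsing_inv _ hdetS, Matrix.one_mulVec]
  -- w² = ∑ ψ²
  have hAinv : A⁻¹ = S⁻¹ * S⁻¹ := by rw [← hSS, Matrix.mul_inv_rev]
  have hwsum : φ ⬝ᵥ (A⁻¹ *ᵥ φ) = ∑ i, (ψ i) ^ 2 := by
    rw [hAinv, ← Matrix.mulVec_mulVec, ← hψ, ← symm_mulVec_dot S⁻¹ hSinv_sym, ← hψ]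
    simp [dotProduct, sq]
  have hψnonneg : (0:ℝ) ≤ ∑ i, (ψ i) ^ 2 := by positivity
  have hwval : w = Real.sqrt (∑ i, (ψ i) ^ 2) := by rw [hw, hwsum]
  have hw0 : 0 ≤ w := by rw [hwval]; exact Real.sqrt_nonneg _
  have hwsq : w ^ 2 = ∑ i, (ψ i) ^ 2 := by
    rw [hwval, Real.sq_sqrt hψnonneg]
  -- rewrite the bilinear form
  have hkey : φ ⬝ᵥ (B *ᵥ η) = ψ ⬝ᵥ ((S * B) *ᵥ η) := by
    rw [← hφψ, symm_mulVec_dot S hSsym, Matrix.mulVec_mulVec]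
  -- bound ‖(S*B) *ᵥ η‖ by frobNorm (S*B) * ‖η‖
  set z := (S * B) *ᵥ η with hz
  have hz2 : ∑ i, (z i) ^ 2 ≤ (∑ i, ∑ j, ((S * B) i j) ^ 2) * ∑ j, (η j) ^ 2 := by
    rw [Finset.sum_mul]
    apply Finset.sum_le_sum
    intro i _
    have hzi : z i = ∑ j, (S * B) i j * η j := by
      simp [hz, Matrix.mulVec, dotProduct]
    rw [hzi]
    exact Finset.sum_mul_sq_le_sq_mul_sq Finset.univ (fun j => (S * B) i j) η
  have hznorm : Real.sqrt (∑ i, (z i) ^ 2) ≤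
      frobNorm (S * B) * Real.sqrt (∑ j, (η j) ^ 2) := by
    have hnn : (0:ℝ) ≤ ∑ i, ∑ j, ((S * B) i j) ^ 2 :=
      Finset.sum_nonneg fun i _ => Finset.sum_nonneg fun j _ => sq_nonneg _
    rw [frobNorm, ← Real.sqrt_mul hnn]
    exact Real.sqrt_le_sqrt hz2
  have hX : |φ ⬝ᵥ (B *ᵥ η)| ≤ w * (Real.sqrt β * Real.sqrt (∑ j, (η j) ^ 2)) := by
    rw [hkey]
    calc |ψ ⬝ᵥ z| ≤ Real.sqrt (∑ i, (ψ i) ^ 2) * Real.sqrt (∑ i, (z i) ^ 2) :=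
          abs_dot_le ψ z
      _ ≤ w * (frobNorm (S * B) * Real.sqrt (∑ j, (η j) ^ 2)) := by
          rw [← hwval]
          exact mul_le_mul_of_nonneg_left hznorm hw0
      _ ≤ w * (Real.sqrt β * Real.sqrt (∑ j, (η j) ^ 2)) := by
          apply mul_le_mul_of_nonneg_left _ hw0
          exact mul_le_mul_of_nonneg_right hball (Real.sqrt_nonneg _)
  -- elementary fraction bound
  have hden : (0:ℝ) < 1 + w ^ 2 := by positivity
  have hfrac : w / (1 + w ^ 2) ≤ min w (1 / 2) := by
    rcases le_total w (1/2) with h | h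
    · rw [min_eq_left h]
      rw [div_le_iff₀ hden]
      nlinarith
    · rw [min_eq_right h]
      rw [div_le_iff₀ hden]
      nlinarith [sq_nonneg (w - 1)]
  have hη0 : (0:ℝ) ≤ Real.sqrt (∑ j, (η j) ^ 2) := Real.sqrt_nonneg _
  have hβ0 : (0:ℝ) ≤ Real.sqrt β := Real.sqrt_nonneg _
  calc |2 * (φ ⬝ᵥ (B *ᵥ η)) / (1 + w ^ 2)|
      = 2 * |φ ⬝ᵥ (B *ᵥ η)| / (1 + w ^ 2) := by
        rw [abs_div, abs_of_pos hden, abs_mul, abs_two]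
    _ ≤ 2 * (w * (Real.sqrt β * Real.sqrt (∑ j, (η j) ^ 2))) / (1 + w ^ 2) := by
        have := hX
        gcongr
    _ = 2 * Real.sqrt (∑ j, (η j) ^ 2) * Real.sqrt β * (w / (1 + w ^ 2)) := by
        field_simp
    _ ≤ 2 * Real.sqrt (∑ j, (η j) ^ 2) * Real.sqrt β * min w (1 / 2) := by
        apply mul_le_mul_of_nonneg_left hfrac
        positivity
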